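/- Let (K, L, c) be a feasibility problem where K = K^{n_1} × … × K^{n_m} is an extended second order cone, L ⊆ ℝ^n a linear subspace, c ∈ ℝ^n. Suppose there is a nonzero a ∈ K ∩ L such that H₁(a) ∪ H₂(a) ≠ ∅, and let K̃ be the relaxed cone obtained from K and a. Then (K, L, c) is strongly infeasible if and only if (K̃, L, c) is strongly infeasible. -/

import Mathlib

open scoped RealInnerProductSpace Pointwise
open Classical

noncomputable section

/-- The Lorentz (second order) cone `SOC^{k+1} = {x = (x₀, x̄) : ‖x̄‖ ≤ x₀} ⊆ ℝ^{k+1}`. -/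
def SOC (k : ℕ) : Set (EuclideanSpace ℝ (Fin (k + 1))) :=
  {x | Real.sqrt (∑ j : Fin k, x j.succ ^ 2) ≤ x 0}

/-- The reflection `x' = (x₀, -x̄)` of `x` with respect to the Lorentz cone. -/
def reflect {k : ℕ} (x : EuclideanSpace ℝ (Fin (k + 1))) : EuclideanSpace ℝ (Fin (k + 1)) :=
  WithLp.toLp 2 (fun j => if j = 0 then x 0 else - x j)

/-- The closed half-space `H_d = {x : dᵀx ≥ 0}`. -/
def halfSpace {k : ℕ} (d : EuclideanSpace ℝ (Fin (k + 1))) :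
    Set (EuclideanSpace ℝ (Fin (k + 1))) :=
  {x | 0 ≤ ⟪d, x⟫}

/-- The ray `ray_d = {α • d : α ≥ 0}`. -/
def ray {k : ℕ} (d : EuclideanSpace ℝ (Fin (k + 1))) :
    Set (EuclideanSpace ℝ (Fin (k + 1))) :=
  {x | ∃ α : ℝ, 0 ≤ α ∧ x = α • d}

/-- A block of an extended second order cone: the trivial cone `{0}`, the whole space,
the Lorentz cone, a closed half-space `H_d` with `d ∈ SOC \ {0}`, or a ray `ray_d` with
`d ∈ SOC`. -/
def IsESOCBlock {k : ℕ} (B : Set (EuclideanSpace ℝ (Fin (k + 1)))) : Prop :=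
  B = {0} ∨ B = Set.univ ∨ B = SOC k ∨
    (∃ d ∈ SOC k, d ≠ 0 ∧ B = halfSpace d) ∨ ∃ d ∈ SOC k, B = ray d

/-- The total space `ℝ^n = ℝ^{n_1} × ⋯ × ℝ^{n_m}` with the Euclidean (ℓ²) structure. -/
abbrev TS {m : ℕ} (k : Fin m → ℕ) := PiLp 2 fun i => EuclideanSpace ℝ (Fin (k i + 1))

/-- The product cone `K = K^{n_1} × ⋯ × K^{n_m}` determined by the blocks `B i`. -/
def prodSet {m : ℕ} (k : Fin m → ℕ) (B : ∀ i, Set (EuclideanSpace ℝ (Fin (k i + 1)))) :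
    Set (TS k) :=
  {x | ∀ i, x i ∈ B i}

/-- `B` describes an extended second order cone (blockwise). -/
def IsESOC {m : ℕ} (k : Fin m → ℕ) (B : ∀ i, Set (EuclideanSpace ℝ (Fin (k i + 1)))) : Prop :=
  ∀ i, IsESOCBlock (B i)

/-- `H₁(a, K) = {i : K^{n_i} = SOC^{n_i}, a_{n_i} ∈ ri SOC^{n_i}}`. -/
def H1 {m : ℕ} (k : Fin m → ℕ) (B : ∀ i, Set (EuclideanSpace ℝ (Fin (k i + 1))))
    (a : TS k) : Set (Fin m) :=
  {i | B i = SOC (k i) ∧ a i ∈ intrinsicInterior ℝ (SOC (k i))}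

/-- `H₂(a, K) = {i : K^{n_i} = SOC^{n_i}, a_{n_i} ∈ (rel bd SOC^{n_i}) \ {0}}`. -/
def H2 {m : ℕ} (k : Fin m → ℕ) (B : ∀ i, Set (EuclideanSpace ℝ (Fin (k i + 1))))
    (a : TS k) : Set (Fin m) :=
  {i | B i = SOC (k i) ∧ a i ∈ intrinsicFrontier ℝ (SOC (k i)) ∧ a i ≠ 0}

/-- The relaxed cone `K̃` obtained from `K` and `a` (blockwise): block `i` becomes the whole
space if `i ∈ H₁(a, K)`, the half-space `H_{(a_{n_i})'}` if `i ∈ H₂(a, K)`, and is unchanged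
otherwise. -/
def relaxedBlocks {m : ℕ} (k : Fin m → ℕ) (B : ∀ i, Set (EuclideanSpace ℝ (Fin (k i + 1))))
    (a : TS k) : ∀ i, Set (EuclideanSpace ℝ (Fin (k i + 1))) :=
  fun i =>
    if i ∈ H1 k B a then Set.univ
    else if i ∈ H2 k B a then halfSpace (reflect (a i))
    else B i

/-- The affine set `L + c`. -/
def affineSet {V : Type*} [AddCommGroup V] [Module ℝ V] (L : Submodule ℝ V) (c : V) :
    Set V :=
  {x | x - c ∈ L}

/-- The distance between two sets. -/
def setDist {V : Type*} [NormedAddCommGroup V] (A B : Set V) : ℝ :=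
  sInf (Set.image2 dist A B)

/-- `(K, L, c)` is strongly feasible: `(L + c) ∩ ri K ≠ ∅`. -/
def StronglyFeasible {V : Type*} [NormedAddCommGroup V] [Module ℝ V]
    (K : Set V) (L : Submodule ℝ V) (c : V) : Prop :=
  (affineSet L c ∩ intrinsicInterior ℝ K).Nonempty

/-- `(K, L, c)` is weakly feasible: `K ∩ (L + c) ≠ ∅` but `(L + c) ∩ ri K = ∅`. -/
def WeaklyFeasible {V : Type*} [NormedAddCommGroup V] [Module ℝ V]
    (K : Set V) (L : Submodule ℝ V) (c : V) : Prop :=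
  (K ∩ affineSet L c).Nonempty ∧ affineSet L c ∩ intrinsicInterior ℝ K = ∅

/-- `(K, L, c)` is weakly infeasible: `K ∩ (L + c) = ∅` but `dist(K, L + c) = 0`. -/
def WeaklyInfeasible {V : Type*} [NormedAddCommGroup V] [Module ℝ V]
    (K : Set V) (L : Submodule ℝ V) (c : V) : Prop :=
  K ∩ affineSet L c = ∅ ∧ setDist K (affineSet L c) = 0

/-- `(K, L, c)` is strongly infeasible: `K ∩ (L + c) = ∅` and `dist(K, L + c) > 0`. -/
def StronglyInfeasible {V : Type*} [NormedAddCommGroup V] [Module ℝ V]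
    (K : Set V) (L : Submodule ℝ V) (c : V) : Prop :=
  K ∩ affineSet L c = ∅ ∧ 0 < setDist K (affineSet L c)

/-- `(K, L, c)` is in weak status: weakly feasible or weakly infeasible. -/
def WeakStatus {V : Type*} [NormedAddCommGroup V] [Module ℝ V]
    (K : Set V) (L : Submodule ℝ V) (c : V) : Prop :=
  WeaklyFeasible K L c ∨ WeaklyInfeasible K L c


def tl {k : ℕ} (x : EuclideanSpace ℝ (Fin (k + 1))) : EuclideanSpace ℝ (Fin k) :=
  WithLp.toLp 2 (fun j => x j.succ)

variable {k : ℕ}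

lemma tl_add (x y : EuclideanSpace ℝ (Fin (k + 1))) : tl (x + y) = tl x + tl y := rfl
lemma tl_smul (t : ℝ) (x : EuclideanSpace ℝ (Fin (k + 1))) : tl (t • x) = t • tl x := rfl
lemma tl_sub (x y : EuclideanSpace ℝ (Fin (k + 1))) : tl (x - y) = tl x - tl y := rfl
lemma head_add (x y : EuclideanSpace ℝ (Fin (k + 1))) : (x + y) 0 = x 0 + y 0 := rfl
lemma head_smul (t : ℝ) (x : EuclideanSpace ℝ (Fin (k + 1))) : (t • x) 0 = t * x 0 := rfl

lemma norm_tl (x : EuclideanSpace ℝ (Fin (k + 1))) :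
    ‖tl x‖ = Real.sqrt (∑ j : Fin k, x j.succ ^ 2) := by
  rw [EuclideanSpace.norm_eq]
  congr 1
  exact Finset.sum_congr rfl fun j _ => by rw [Real.norm_eq_abs, sq_abs]; rfl

lemma mem_SOC_iff {x : EuclideanSpace ℝ (Fin (k + 1))} : x ∈ SOC k ↔ ‖tl x‖ ≤ x 0 := by
  rw [SOC, Set.mem_setOf_eq, ← norm_tl]

lemma norm_tl_le (x : EuclideanSpace ℝ (Fin (k + 1))) : ‖tl x‖ ≤ ‖x‖ := by
  rw [EuclideanSpace.norm_eq, EuclideanSpace.norm_eq]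
  apply Real.sqrt_le_sqrt
  rw [Fin.sum_univ_succ]
  exact le_add_of_nonneg_left (sq_nonneg _)

lemma abs_head_le (x : EuclideanSpace ℝ (Fin (k + 1))) : |x 0| ≤ ‖x‖ := by
  rw [EuclideanSpace.norm_eq, Fin.sum_univ_succ]
  calc |x 0| = Real.sqrt (‖x 0‖ ^ 2) := by rw [Real.sqrt_sq_eq_abs, Real.norm_eq_abs, abs_abs]
    _ ≤ _ := Real.sqrt_le_sqrt (le_add_of_nonneg_right (Finset.sum_nonneg fun _ _ => sq_nonneg _))
variable {k : ℕ}

lemma tl_single_zero : tl (EuclideanSpace.single (0 : Fin (k + 1)) (1 : ℝ)) = 0 := by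
  ext j
  show EuclideanSpace.single (0 : Fin (k + 1)) (1 : ℝ) j.succ = 0
  rw [EuclideanSpace.single_apply, if_neg (Fin.succ_ne_zero j)]

lemma single_head : EuclideanSpace.single (0 : Fin (k + 1)) (1 : ℝ) 0 = 1 := by
  rw [EuclideanSpace.single_apply, if_pos rfl]

lemma mem_interior_SOC_iff {a : EuclideanSpace ℝ (Fin (k + 1))} :
    a ∈ interior (SOC k) ↔ ‖tl a‖ < a 0 := by
  constructor
  · intro h
    rw [mem_interior_iff_mem_nhds, Metric.mem_nhds_iff] at h
    obtain ⟨ε, hε, hb⟩ := h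
    set e0 : EuclideanSpace ℝ (Fin (k + 1)) := EuclideanSpace.single 0 1 with he0
    have hbm : a - (ε / 2) • e0 ∈ SOC k := by
      apply hb
      rw [Metric.mem_ball, dist_eq_norm, sub_sub_cancel_left, norm_neg, norm_smul,
        Real.norm_eq_abs, abs_of_pos (by linarith), he0, EuclideanSpace.norm_single,
        norm_one, mul_one]
      linarith
    rw [mem_SOC_iff] at hbm
    have h1 : tl (a - (ε / 2) • e0) = tl a := by
      rw [tl_sub, tl_smul, he0, tl_single_zero, smul_zero, sub_zero]
    have h2 : (a - (ε / 2) • e0) 0 = a 0 - ε / 2 := by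
      show a 0 - ε / 2 * e0 0 = a 0 - ε / 2
      rw [he0, single_head, mul_one]
    rw [h1, h2] at hbm
    linarith
  · intro h
    rw [mem_interior_iff_mem_nhds, Metric.mem_nhds_iff]
    refine ⟨(a 0 - ‖tl a‖) / 2, by linarith, fun x hx => ?_⟩
    rw [Metric.mem_ball, dist_eq_norm] at hx
    have h1 : ‖tl x‖ ≤ ‖tl a‖ + ‖tl (x - a)‖ := by
      calc ‖tl x‖ = ‖tl a + (tl x - tl a)‖ := by rw [add_sub_cancel]
        _ ≤ ‖tl a‖ + ‖tl x - tl a‖ := norm_add_le _ _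
        _ = ‖tl a‖ + ‖tl (x - a)‖ := by rw [tl_sub]
    have h2 : |x 0 - a 0| ≤ ‖x - a‖ := by
      have := abs_head_le (x - a); simpa using this
    have h3 : ‖tl (x - a)‖ ≤ ‖x - a‖ := norm_tl_le _
    have h4 : a 0 - x 0 ≤ |x 0 - a 0| := by
      rw [abs_sub_comm]; exact le_abs_self _
    rw [mem_SOC_iff]
    linarith

lemma affineSpan_SOC : affineSpan ℝ (SOC k) = ⊤ := by
  apply affineSpan_eq_top_of_nonempty_interior
  refine ⟨EuclideanSpace.single 0 1, interior_mono (subset_convexHull ℝ _) ?_⟩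
  rw [mem_interior_SOC_iff, tl_single_zero, norm_zero, single_head]
  norm_num

lemma intrinsicInterior_subset_interior {V : Type*} [NormedAddCommGroup V] [NormedSpace ℝ V]
    {s : Set V} (h : affineSpan ℝ s = ⊤) : intrinsicInterior ℝ s ⊆ interior s := by
  rintro x ⟨y, hy, rfl⟩
  rw [mem_interior_iff_mem_nhds, Metric.mem_nhds_iff]
  rw [mem_interior_iff_mem_nhds, Metric.mem_nhds_iff] at hy
  obtain ⟨ε, hε, hball⟩ := hy
  refine ⟨ε, hε, fun v hv => ?_⟩
  have hvmem : v ∈ affineSpan ℝ s := h ▸ AffineSubspace.mem_top ℝ V v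
  have : (⟨v, hvmem⟩ : affineSpan ℝ s) ∈ Metric.ball y ε := by
    rw [Metric.mem_ball, Subtype.dist_eq]
    exact hv
  exact hball this
variable {k : ℕ}

lemma inner_reflect (a x : EuclideanSpace ℝ (Fin (k + 1))) :
    ⟪reflect a, x⟫ = a 0 * x 0 - ⟪tl a, tl x⟫ := by
  simp only [PiLp.inner_apply, RCLike.inner_apply, conj_trivial]
  rw [Fin.sum_univ_succ]
  have h0 : reflect a 0 = a 0 := by rw [reflect]; simp
  have hs : ∀ j : Fin k, x j.succ * reflect a j.succ = -(tl x j * tl a j) := by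
    intro j
    show x j.succ * (if j.succ = 0 then a 0 else - a j.succ) = _
    rw [if_neg (Fin.succ_ne_zero j)]
    show x j.succ * -a j.succ = -(x j.succ * a j.succ)
    ring
  rw [Finset.sum_congr rfl fun j _ => hs j, Finset.sum_neg_distrib]
  rw [h0]
  ring

lemma zero_mem_SOC : (0 : EuclideanSpace ℝ (Fin (k + 1))) ∈ SOC k := by
  rw [mem_SOC_iff]
  have : tl (0 : EuclideanSpace ℝ (Fin (k + 1))) = 0 := rfl
  rw [this, norm_zero]
  exact le_refl _

lemma soc_add_smul {x y : EuclideanSpace ℝ (Fin (k + 1))} (hx : x ∈ SOC k) (hy : y ∈ SOC k)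
    {t : ℝ} (ht : 0 ≤ t) : x + t • y ∈ SOC k := by
  rw [mem_SOC_iff] at hx hy ⊢
  have h1 : tl (x + t • y) = tl x + t • tl y := rfl
  have h2 : (x + t • y) 0 = x 0 + t * y 0 := rfl
  rw [h1, h2]
  calc ‖tl x + t • tl y‖ ≤ ‖tl x‖ + ‖t • tl y‖ := norm_add_le _ _
    _ = ‖tl x‖ + t * ‖tl y‖ := by rw [norm_smul, Real.norm_eq_abs, abs_of_nonneg ht]
    _ ≤ x 0 + t * y 0 := add_le_add hx (mul_le_mul_of_nonneg_left hy ht)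

lemma soc_subset_halfSpace_reflect {a : EuclideanSpace ℝ (Fin (k + 1))} (ha : a ∈ SOC k) :
    SOC k ⊆ halfSpace (reflect a) := by
  intro x hx
  rw [mem_SOC_iff] at ha hx
  rw [halfSpace, Set.mem_setOf_eq, inner_reflect]
  have hcs : ⟪tl a, tl x⟫ ≤ ‖tl a‖ * ‖tl x‖ := real_inner_le_norm _ _
  have : ‖tl a‖ * ‖tl x‖ ≤ a 0 * x 0 :=
    mul_le_mul ha hx (norm_nonneg _) ((norm_nonneg (tl a)).trans ha)
  linarith

lemma head_pos_of_bd {a : EuclideanSpace ℝ (Fin (k + 1))} (h : ‖tl a‖ = a 0) (h0 : a ≠ 0) :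
    0 < a 0 := by
  have hn : 0 ≤ a 0 := h ▸ norm_nonneg _
  rcases hn.lt_or_eq with hp | hz
  · exact hp
  · exfalso
    apply h0
    have htl : tl a = 0 := norm_eq_zero.1 (by rw [h, ← hz])
    ext j
    refine Fin.cases ?_ ?_ j
    · exact hz.symm
    · intro j'
      exact congrArg (fun v => v j') htl

lemma approx_H1 {a : EuclideanSpace ℝ (Fin (k + 1))} (ha : ‖tl a‖ < a 0)
    (x : EuclideanSpace ℝ (Fin (k + 1))) :
    ∃ T : ℝ, ∀ t ≥ T, x + t • a ∈ SOC k := by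
  refine ⟨max 0 ((‖tl x‖ - x 0) / (a 0 - ‖tl a‖)), fun t ht => ?_⟩
  have ht0 : 0 ≤ t := le_trans (le_max_left _ _) ht
  rw [mem_SOC_iff]
  have h1 : tl (x + t • a) = tl x + t • tl a := rfl
  have h2 : (x + t • a) 0 = x 0 + t * a 0 := rfl
  rw [h1, h2]
  have key : ‖tl x‖ - x 0 ≤ t * (a 0 - ‖tl a‖) := by
    have h3 := le_trans (le_max_right _ _) ht
    rw [div_le_iff₀ (by linarith)] at h3
    linarith
  calc ‖tl x + t • tl a‖ ≤ ‖tl x‖ + t * ‖tl a‖ := by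
        refine le_trans (norm_add_le _ _) ?_
        rw [norm_smul, Real.norm_eq_abs, abs_of_nonneg ht0]
    _ ≤ x 0 + t * a 0 := by nlinarith

lemma approx_H2 {a x : EuclideanSpace ℝ (Fin (k + 1))} (ha : ‖tl a‖ = a 0) (ha0 : 0 < a 0)
    (hx : x ∈ halfSpace (reflect a)) {ε : ℝ} (hε : 0 < ε) :
    ∃ T : ℝ, ∀ t ≥ T, ∃ z ∈ SOC k, dist (x + t • a) z ≤ ε := by
  set C := ‖tl x‖ ^ 2 with hCdef
  have hC0 : 0 ≤ C := sq_nonneg _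
  set M := max 1 (C / (2 * ε)) with hMdef
  refine ⟨max 0 ((M - x 0) / a 0), fun t ht => ?_⟩
  have ht0 : 0 ≤ t := le_trans (le_max_left _ _) ht
  set u := x 0 + t * a 0 with hu
  have huM : M ≤ u := by
    have h3 : (M - x 0) / a 0 ≤ t := le_trans (le_max_right _ _) ht
    rw [div_le_iff₀ ha0] at h3
    linarith
  have hu1 : (1 : ℝ) ≤ u := le_trans (le_max_left _ _) huM
  have hu0 : 0 < u := by linarith
  set s := C / (2 * u) with hs
  have hs0 : 0 ≤ s := div_nonneg hC0 (by linarith)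
  set e0 : EuclideanSpace ℝ (Fin (k + 1)) := EuclideanSpace.single 0 1 with he0
  refine ⟨x + t • a + s • e0, ?_, ?_⟩
  · rw [mem_SOC_iff]
    have hz0 : (x + t • a + s • e0) 0 = u + s := by
      show x 0 + t * a 0 + s * e0 0 = u + s
      rw [he0, single_head, mul_one]
    have hztl : tl (x + t • a + s • e0) = tl x + t • tl a := by
      rw [tl_add, tl_add, tl_smul, tl_smul, he0, tl_single_zero, smul_zero, add_zero]
    rw [hztl, hz0]
    have hinner : ⟪tl a, tl x⟫ ≤ a 0 * x 0 := by
      have h4 := hx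
      rw [halfSpace, Set.mem_setOf_eq, inner_reflect] at h4
      linarith
    have hinner' : ⟪tl x, tl a⟫ ≤ a 0 * x 0 := by rw [real_inner_comm]; exact hinner
    have hexp : ‖tl x + t • tl a‖ ^ 2
        = ‖tl x‖ ^ 2 + 2 * (t * ⟪tl x, tl a⟫) + t ^ 2 * a 0 ^ 2 := by
      rw [norm_add_sq_real, real_inner_smul_right, norm_smul, Real.norm_eq_abs, mul_pow,
        sq_abs, ha]
    have hus : u * s = C / 2 := by
      rw [hs]
      field_simp
    have hsq : ‖tl x + t • tl a‖ ^ 2 ≤ (u + s) ^ 2 := by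
      have hmul : 2 * t * ⟪tl x, tl a⟫ ≤ 2 * t * (a 0 * x 0) :=
        mul_le_mul_of_nonneg_left hinner' (by linarith)
      nlinarith [sq_nonneg s, sq_nonneg (x 0), hexp, hus, hmul]
    have hups : 0 ≤ u + s := by linarith
    nlinarith [norm_nonneg (tl x + t • tl a), hsq, hups]
  · rw [dist_eq_norm]
    have hdiff : x + t • a - (x + t • a + s • e0) = -(s • e0) := by abel
    rw [hdiff, norm_neg, norm_smul, Real.norm_eq_abs, abs_of_nonneg hs0, he0,
      EuclideanSpace.norm_single, norm_one, mul_one]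
    have hM2 : C / (2 * ε) ≤ u := le_trans (le_max_right _ _) huM
    rw [div_le_iff₀ (by positivity)] at hM2
    rw [hs, div_le_iff₀ (by linarith : (0:ℝ) < 2 * u)]
    linarith
lemma block_add_smul {k : ℕ} {B : Set (EuclideanSpace ℝ (Fin (k + 1)))} (hB : IsESOCBlock B)
    {x y : EuclideanSpace ℝ (Fin (k + 1))} (hx : x ∈ B) (hy : y ∈ B) {t : ℝ} (ht : 0 ≤ t) :
    x + t • y ∈ B := by
  rcases hB with h | h | h | ⟨d, hd, hd0, h⟩ | ⟨d, hd, h⟩ <;> subst h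
  · rw [Set.mem_singleton_iff] at hx hy ⊢
    rw [hx, hy, smul_zero, add_zero]
  · trivial
  · exact soc_add_smul hx hy ht
  · rw [halfSpace, Set.mem_setOf_eq] at hx hy ⊢
    rw [inner_add_right, real_inner_smul_right]
    exact add_nonneg hx (mul_nonneg ht hy)
  · obtain ⟨α, hα, rfl⟩ := hx
    obtain ⟨β, hβ, rfl⟩ := hy
    exact ⟨α + t * β, by positivity, by rw [add_smul, smul_smul]⟩

lemma zero_mem_block {k : ℕ} {B : Set (EuclideanSpace ℝ (Fin (k + 1)))} (hB : IsESOCBlock B) :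
    (0 : EuclideanSpace ℝ (Fin (k + 1))) ∈ B := by
  rcases hB with h | h | h | ⟨d, hd, hd0, h⟩ | ⟨d, hd, h⟩ <;> subst h
  · exact rfl
  · trivial
  · exact zero_mem_SOC
  · rw [halfSpace, Set.mem_setOf_eq, inner_zero_right]
  · exact ⟨0, le_refl _, (zero_smul ℝ d).symm⟩

/-- Blockwise approximation: moving far along `a`, points of the relaxed block get
`ε`-close to the original block. -/
lemma block_approx {m : ℕ} (k : Fin m → ℕ) (B : ∀ i, Set (EuclideanSpace ℝ (Fin (k i + 1))))
    (hB : IsESOC k B) (a : TS k) (haK : a ∈ prodSet k B) (i : Fin m)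
    {xi : EuclideanSpace ℝ (Fin (k i + 1))} (hxi : xi ∈ relaxedBlocks k B a i)
    {ε : ℝ} (hε : 0 < ε) :
    ∃ T : ℝ, ∀ t ≥ T, ∃ z ∈ B i, dist (xi + t • a i) z ≤ ε := by
  by_cases h1 : i ∈ H1 k B a
  · obtain ⟨hBi, hri⟩ := h1
    have hstrict : ‖tl (a i)‖ < a i 0 :=
      mem_interior_SOC_iff.mp (intrinsicInterior_subset_interior affineSpan_SOC hri)
    obtain ⟨T, hT⟩ := approx_H1 hstrict xi
    exact ⟨T, fun t ht => ⟨xi + t • a i, hBi ▸ hT t ht, by rw [dist_self]; linarith⟩⟩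
  by_cases h2 : i ∈ H2 k B a
  · obtain ⟨hBi, hfr, hne⟩ := id h2
    have haS : a i ∈ SOC (k i) := hBi ▸ haK i
    have haeq : ‖tl (a i)‖ = a i 0 := by
      have hf : a i ∈ frontier (SOC (k i)) := intrinsicFrontier_subset_frontier hfr
      have hni : a i ∉ interior (SOC (k i)) := fun hi => hf.2 hi
      rw [mem_interior_SOC_iff] at hni
      exact le_antisymm (mem_SOC_iff.1 haS) (not_lt.1 hni)
    have hpos : 0 < a i 0 := head_pos_of_bd haeq hne
    have hxh : xi ∈ halfSpace (reflect (a i)) := by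
      have := hxi
      rwa [relaxedBlocks, if_neg h1, if_pos h2] at this
    obtain ⟨T, hT⟩ := approx_H2 haeq hpos hxh hε
    exact ⟨T, fun t ht => by
      obtain ⟨z, hz, hdz⟩ := hT t ht
      exact ⟨z, hBi ▸ hz, hdz⟩⟩
  · have hxB : xi ∈ B i := by
      have := hxi
      rwa [relaxedBlocks, if_neg h1, if_neg h2] at this
    refine ⟨0, fun t ht => ⟨xi + t • a i, block_add_smul (hB i) hxB (haK i) ht, ?_⟩⟩
    rw [dist_self]
    linarith

/-- Product approximation. -/
lemma prod_approx {m : ℕ} (k : Fin m → ℕ) (B : ∀ i, Set (EuclideanSpace ℝ (Fin (k i + 1))))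
    (hB : IsESOC k B) (a : TS k) (haK : a ∈ prodSet k B) {x : TS k}
    (hx : x ∈ prodSet k (relaxedBlocks k B a)) {ε : ℝ} (hε : 0 < ε) :
    ∃ t : ℝ, 0 ≤ t ∧ ∃ z ∈ prodSet k B, dist (x + t • a) z ≤ ε := by
  set ε' := ε / (m + 1) with hε'
  have hε'0 : 0 < ε' := by positivity
  have hbt : ∀ i : Fin m, ∃ T : ℝ, ∀ t ≥ T, ∃ z ∈ B i, dist (x i + t • a i) z ≤ ε' :=
    fun i => block_approx k B hB a haK i (hx i) hε'0
  choose T hT using hbt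
  set t := ∑ j : Fin m, |T j| with htdef
  have ht0 : 0 ≤ t := Finset.sum_nonneg fun j _ => abs_nonneg _
  have htge : ∀ i, T i ≤ t :=
    fun i => le_trans (le_abs_self _)
      (Finset.single_le_sum (f := fun j => |T j|) (fun j _ => abs_nonneg _) (Finset.mem_univ i))
  choose z hz hdz using fun i => hT i t (htge i)
  refine ⟨t, ht0, (WithLp.toLp 2 fun i => z i : TS k), fun i => hz i, ?_⟩
  have hdists : dist (x + t • a) (WithLp.toLp 2 fun i => z i : TS k)
      = Real.sqrt (∑ i, dist ((x + t • a) i) (z i) ^ 2) := PiLp.dist_eq_of_L2 _ _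
  rw [hdists]
  have hbound : ∑ i, dist ((x + t • a) i) (z i) ^ 2 ≤ (m : ℝ) * ε' ^ 2 := by
    calc ∑ i, dist ((x + t • a) i) (z i) ^ 2 ≤ ∑ _i : Fin m, ε' ^ 2 := by
          refine Finset.sum_le_sum fun i _ => ?_
          have hcomp : (x + t • a) i = x i + t • a i := rfl
          rw [hcomp]
          exact pow_le_pow_left₀ dist_nonneg (hdz i) 2
      _ = (m : ℝ) * ε' ^ 2 := by
          rw [Finset.sum_const, Finset.card_univ, Fintype.card_fin, nsmul_eq_mul]
  have hmle : (m : ℝ) * ε' ^ 2 ≤ ε ^ 2 := by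
    have hm : (0 : ℝ) ≤ m := Nat.cast_nonneg m
    have h1 : (0:ℝ) < ((m:ℝ)+1)^2 := by positivity
    rw [hε', div_pow, ← mul_div_assoc, div_le_iff₀ h1]
    nlinarith [sq_nonneg ε, sq_nonneg ((m : ℝ) * ε), mul_nonneg hm (sq_nonneg ε)]
  calc Real.sqrt (∑ i, dist ((x + t • a) i) (z i) ^ 2) ≤ Real.sqrt (ε ^ 2) :=
        Real.sqrt_le_sqrt (le_trans hbound hmle)
    _ = ε := Real.sqrt_sq hε.le

/-- **Theorem 1(iii).** Let `(K, L, c)` be a feasibility problem where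
`K = K^{n_1} × ⋯ × K^{n_m}` is an extended second order cone, `L` a linear subspace and
`c` a point.  Suppose there is a nonzero `a ∈ K ∩ L` with `H₁(a) ∪ H₂(a) ≠ ∅` and let `K̃`
be the relaxed cone obtained from `K` and `a`.  Then `(K, L, c)` is strongly infeasible if
and only if `(K̃, L, c)` is strongly infeasible. -/
theorem relaxation_strongly_infeasible_iff {m : ℕ} (k : Fin m → ℕ)
    (B : ∀ i, Set (EuclideanSpace ℝ (Fin (k i + 1)))) (hB : IsESOC k B)
    (L : Submodule ℝ (TS k)) (c : TS k) (a : TS k)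
    (haK : a ∈ prodSet k B) (haL : a ∈ L) (ha0 : a ≠ 0)
    (hH : (H1 k B a ∪ H2 k B a).Nonempty) :
    StronglyInfeasible (prodSet k B) L c ↔
      StronglyInfeasible (prodSet k (relaxedBlocks k B a)) L c := by
  set Kb := prodSet k B with hKb
  set Kt := prodSet k (relaxedBlocks k B a) with hKt
  set A := affineSet L c with hA
  have hsub : Kb ⊆ Kt := by
    intro x hx i
    rw [relaxedBlocks]
    split_ifs with h1 h2
    · trivial
    · have hBi : B i = SOC (k i) := h2.1
      have haS : a i ∈ SOC (k i) := hBi ▸ haK i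
      exact soc_subset_halfSpace_reflect haS (hBi ▸ hx i)
    · exact hx i
  have hKne : Kb.Nonempty := ⟨0, fun i => zero_mem_block (hB i)⟩
  have hAne : A.Nonempty := ⟨c, by rw [hA, affineSet, Set.mem_setOf_eq, sub_self]; exact L.zero_mem⟩
  have hbdd : ∀ S T : Set (TS k), BddBelow (Set.image2 dist S T) := by
    intro S T
    refine ⟨0, ?_⟩
    rintro r ⟨x, _, y, _, rfl⟩
    exact dist_nonneg
  have hAadd : ∀ y ∈ A, ∀ t : ℝ, y + t • a ∈ A := by
    intro y hy t
    rw [hA, affineSet, Set.mem_setOf_eq] at hy ⊢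
    have : y + t • a - c = y - c + t • a := by abel
    rw [this]
    exact L.add_mem hy (L.smul_mem t haL)
  constructor
  · rintro ⟨hempty, hpos⟩
    have key : ∀ x ∈ Kt, ∀ y ∈ A, setDist Kb A ≤ dist x y := by
      intro x hx y hy
      by_contra hlt
      push_neg at hlt
      have hgap : 0 < (setDist Kb A - dist x y) / 2 := by linarith
      obtain ⟨t, ht0, z, hz, hdz⟩ := prod_approx k B hB a haK hx hgap
      have hyA : y + t • a ∈ A := hAadd y hy t
      have hle : setDist Kb A ≤ dist z (y + t • a) :=
        csInf_le (hbdd _ _) ⟨z, hz, y + t • a, hyA, rfl⟩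
      have hd2 : dist (x + t • a) (y + t • a) = dist x y := dist_add_right x y (t • a)
      have htri : dist z (y + t • a) ≤ dist z (x + t • a) + dist (x + t • a) (y + t • a) :=
        dist_triangle _ _ _
      rw [dist_comm z (x + t • a)] at htri
      rw [hd2] at htri
      linarith
    refine ⟨?_, ?_⟩
    · rw [Set.eq_empty_iff_forall_notMem]
      rintro x ⟨hx1, hx2⟩
      have := key x hx1 x hx2
      rw [dist_self] at this
      linarith
    · have hle : setDist Kb A ≤ setDist Kt A := by
        apply le_csInf (Set.Nonempty.image2 (hKne.mono hsub) hAne)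
        rintro r ⟨x, hx, y, hy, rfl⟩
        exact key x hx y hy
      linarith
  · rintro ⟨hempty, hpos⟩
    refine ⟨?_, ?_⟩
    · rw [← Set.subset_empty_iff, ← hempty]
      exact Set.inter_subset_inter_left A hsub
    · have hle : setDist Kt A ≤ setDist Kb A :=
        csInf_le_csInf (hbdd _ _) (Set.Nonempty.image2 hKne hAne)
          (Set.image2_subset hsub Set.Subset.rfl)
      linarith

end
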